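/- Fix n ∈ ℕ, c > 0, and a positive martingale (S_m)_{m=0}^n with S_0 = 1 satisfying E[(S_{m+1} − S_m)² | F_m] = (exp(c/n) − 1)·S_m² and |S_{m+1}/S_m − 1| ≤ ζ_n a.s. Define T_m = S_m/S_{m−1} − 1 and W_m = log S_m + cm/(2n), and let β_m = −Σ_{k=1}^m (E[log(1 + T_k) | F_{k−1}] + c/(2n)). Then for n large enough that 3(1 − ζ_n) ≥ 1, exp(c/n) − 1 ≤ 2c/n, and exp(c/n) − 1 − c/n ≤ 2c²/n², one has max_{1 ≤ m ≤ n} |β_m| ≤ 2c·ζ_n + c²/n almost surely. -/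

import Mathlib

open MeasureTheory ProbabilityTheory Real

lemma log_taylor_bound {t ζ : ℝ} (ht : |t| ≤ ζ) (hζ : ζ < 1) (h1 : 1 ≤ 3*(1-ζ)) :
    |Real.log (1 + t) - t + t^2/2| ≤ ζ * t^2 := by
  have ht1 : |t| < 1 := lt_of_le_of_lt ht hζ
  have h0 : |(-t)| < 1 := by rwa [abs_neg]
  set f : ℕ → ℝ := fun n => (-t)^(n+1)/(n+1) with hf
  have hsum : HasSum f (-Real.log (1 + t)) := by
    have := Real.hasSum_pow_div_log_of_abs_lt_one h0
    simpa using this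
  set s : ℝ := -Real.log (1 + t) - ((-t) + t^2/2) with hs
  have hshift : HasSum (fun n => f (n+2)) s := by
    rw [hasSum_nat_add_iff 2]
    have : ∑ i ∈ Finset.range 2, f i = (-t) + t^2/2 := by
      simp [hf, Finset.sum_range_succ]
      ring
    rw [this, hs]
    simpa using hsum
  have hg : HasSum (fun n : ℕ => (|t|^3/3) * |t|^n) (|t|^3/3 * (1-|t|)⁻¹) := by
    simpa using (hasSum_geometric_of_lt_one (abs_nonneg t) ht1).mul_left (|t|^3/3)
  have hbnd : ∀ n : ℕ, |f (n+2)| ≤ (|t|^3/3) * |t|^n := by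
    intro n
    have h1' : |f (n+2)| = |t|^(n+3)/((n:ℝ)+3) := by
      rw [hf]
      simp only []
      rw [abs_div, abs_pow, abs_neg,
        abs_of_nonneg (show (0:ℝ) ≤ (↑(n+2)+1) by positivity)]
      push_cast
      ring
    rw [h1']
    have he : |t|^(n+3) = |t|^3 * |t|^n := by rw [← pow_add]; ring_nf
    rw [he, div_le_iff₀ (by positivity)]
    have hp : (0:ℝ) ≤ |t|^3 * |t|^n := by positivity
    nlinarith [mul_nonneg hp (Nat.cast_nonneg n : (0:ℝ) ≤ n)]
  have hB : |s| ≤ |t|^3/3 * (1-|t|)⁻¹ := by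
    rw [abs_le]
    constructor
    · have h := hasSum_le (fun n => show -(f (n+2)) ≤ (|t|^3/3) * |t|^n from
        (neg_le_abs (f (n+2))).trans (hbnd n)) hshift.neg hg
      linarith
    · exact hasSum_le (fun n => (le_abs_self (f (n+2))).trans (hbnd n)) hshift hg
  have hinv : (1-|t|)⁻¹ ≤ 3 := by
    rw [inv_le_comm₀ (by linarith) (by norm_num)]
    linarith [abs_le.mp (abs_le.mpr ⟨neg_le_of_neg_le (neg_le_abs t), le_abs_self t⟩)]
  have hfin : |t|^3/3 * (1-|t|)⁻¹ ≤ ζ * t^2 := by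
    have h2 : |t|^3/3 * (1-|t|)⁻¹ ≤ |t|^3/3 * 3 := by
      apply mul_le_mul_of_nonneg_left hinv (by positivity)
    have h3 : |t|^3 = |t| * t^2 := by
      rw [pow_succ'];  congr 1; exact (sq_abs t)
    nlinarith [sq_nonneg t, abs_nonneg t]
  have hfinal : Real.log (1 + t) - t + t^2/2 = -s := by rw [hs]; ring
  rw [hfinal, abs_neg]
  exact hB.trans hfin

lemma key_lemma {Ω : Type*} {mΩ : MeasurableSpace Ω} (μ : Measure Ω) [IsProbabilityMeasure μ]
    (ℱ : Filtration ℕ mΩ) (S : ℕ → Ω → ℝ) (j : ℕ) (ζ a : ℝ)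
    (hζ0 : 0 < ζ) (hζ1 : ζ < 2/3) (h1 : 1 ≤ 3*(1-ζ)) (ha : 0 < a)
    (hmart : Martingale S ℱ μ)
    (hposj : ∀ᵐ ω ∂μ, 0 < S j ω)
    (hvarj : μ[fun ω => (S (j+1) ω - S j ω)^2 | ℱ j] =ᵐ[μ] fun ω => a * (S j ω)^2)
    (hzcj : ∀ᵐ ω ∂μ, |S (j+1) ω / S j ω - 1| ≤ ζ) :
    ∀ᵐ ω ∂μ, |(μ[fun ω' => Real.log (1 + (S (j+1) ω' / S j ω' - 1)) | ℱ j]) ω + a/2| ≤ ζ * a := by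
  haveI : (MeasureTheory.ae μ).NeBot := ae_neBot.mpr (IsProbabilityMeasure.ne_zero μ)
  set T : Ω → ℝ := fun ω => S (j+1) ω / S j ω - 1 with hTdef
  set L : Ω → ℝ := fun ω => Real.log (1 + T ω) with hLdef
  set g : Ω → ℝ := fun ω => L ω - T ω + (T ω)^2/2 with hgdef
  have hζ1' : ζ < 1 := by linarith
  -- measurability
  have mSj : Measurable (S j) := ((hmart.stronglyAdapted j).mono (ℱ.le j)).measurable
  have mSj1 : Measurable (S (j+1)) := ((hmart.stronglyAdapted (j+1)).mono (ℱ.le (j+1))).measurable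
  have mT : Measurable T := (mSj1.div mSj).sub measurable_const
  have mL : Measurable L := Real.measurable_log.comp (measurable_const.add mT)
  have mg : Measurable g := (mL.sub mT).add ((mT.pow_const 2).div_const 2)
  -- a.e. bounds
  have hTb : ∀ᵐ ω ∂μ, |T ω| ≤ ζ := hzcj
  have hgb : ∀ᵐ ω ∂μ, |g ω| ≤ ζ * (T ω)^2 := by
    filter_upwards [hTb] with ω h
    exact log_taylor_bound h hζ1' h1
  -- integrability
  have intT : Integrable T μ := by
    refine (integrable_const ζ).mono' mT.aestronglyMeasurable ?_
    filter_upwards [hTb] with ω h using by simpa using h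
  have intT2 : Integrable (fun ω => (T ω)^2) μ := by
    refine (integrable_const (ζ^2)).mono' (mT.pow_const 2).aestronglyMeasurable ?_
    filter_upwards [hTb] with ω h
    rw [Real.norm_eq_abs, abs_pow]
    exact pow_le_pow_left₀ (abs_nonneg _) h 2
  have intG : Integrable g μ := by
    refine (integrable_const (ζ * ζ^2)).mono' mg.aestronglyMeasurable ?_
    filter_upwards [hTb, hgb] with ω h h2
    rw [Real.norm_eq_abs]
    refine h2.trans ?_
    have : (T ω)^2 ≤ ζ^2 := by
      rw [← sq_abs]; exact pow_le_pow_left₀ (abs_nonneg _) h 2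
    nlinarith
  have intL : Integrable L μ := by
    have : L = g + (T - fun ω => (T ω)^2/2) := by
      funext ω; simp only [hgdef, Pi.add_apply, Pi.sub_apply]; ring
    rw [this]
    exact intG.add (intT.sub (intT2.div_const 2))
  -- E[T | F j] = 0
  have hSm : StronglyMeasurable[ℱ j] (fun ω => (S j ω)⁻¹) :=
    ((hmart.stronglyAdapted j).measurable.inv).stronglyMeasurable
  have hint1 : Integrable ((fun ω => (S j ω)⁻¹) * S (j+1)) μ := by
    refine (integrable_const (ζ + 1)).mono'
      ((mSj.inv.mul mSj1).aestronglyMeasurable) ?_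
    filter_upwards [hTb, hposj] with ω h hp
    rw [Pi.mul_apply, Real.norm_eq_abs, inv_mul_eq_div]
    have : S (j+1) ω / S j ω = T ω + 1 := by simp [hTdef]
    rw [this]
    calc |T ω + 1| ≤ |T ω| + 1 := by exact (abs_add_le _ _).trans (by simp)
      _ ≤ ζ + 1 := by linarith
  have hTeq : T = (fun ω => (S j ω)⁻¹) * S (j+1) - (fun _ => (1:ℝ)) := by
    funext ω
    simp [hTdef, div_eq_mul_inv, mul_comm]
  have e1 : μ[S (j+1) | ℱ j] =ᵐ[μ] S j := hmart.condExp_ae_eq (Nat.le_succ j)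
  have hT0 : μ[T | ℱ j] =ᵐ[μ] fun _ => (0:ℝ) := by
    calc μ[T | ℱ j] = μ[(fun ω => (S j ω)⁻¹) * S (j+1) - (fun _ => (1:ℝ)) | ℱ j] := by
          rw [← hTeq]
      _ =ᵐ[μ] μ[(fun ω => (S j ω)⁻¹) * S (j+1) | ℱ j] - μ[(fun _ => (1:ℝ)) | ℱ j] :=
          condExp_sub hint1 (integrable_const 1) (ℱ j)
      _ =ᵐ[μ] (fun ω => (S j ω)⁻¹) * S j - (fun _ => (1:ℝ)) := by
          refine Filter.EventuallyEq.sub ?_ ?_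
          · exact (condExp_mul_of_stronglyMeasurable_left hSm hint1
              (hmart.integrable (j+1))).trans (Filter.EventuallyEq.mul Filter.EventuallyEq.rfl e1)
          · rw [condExp_const (ℱ.le j)]
      _ =ᵐ[μ] fun _ => (0:ℝ) := by
          filter_upwards [hposj] with ω hω
          simp [inv_mul_cancel₀ hω.ne']
  -- E[T^2 | F j] = a
  have intD2 : Integrable (fun ω => (S (j+1) ω - S j ω)^2) μ := by
    by_contra h
    rw [condExp_of_not_integrable h] at hvarj
    obtain ⟨ω, h1ω, h2ω⟩ := (hvarj.and hposj).exists
    exact absurd h1ω (ne_of_lt (by positivity : (0:ℝ) < a * (S j ω)^2))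
  have hT2eq : (fun ω => (T ω)^2) =ᵐ[μ]
      (fun ω => ((S j ω)^2)⁻¹) * (fun ω => (S (j+1) ω - S j ω)^2) := by
    filter_upwards [hposj] with ω hω
    have hne : S j ω ≠ 0 := hω.ne'
    simp only [Pi.mul_apply, hTdef]
    field_simp
  have hQm : StronglyMeasurable[ℱ j] (fun ω => ((S j ω)^2)⁻¹) :=
    (((hmart.stronglyAdapted j).measurable.pow_const 2).inv).stronglyMeasurable
  have intQD : Integrable ((fun ω => ((S j ω)^2)⁻¹) * (fun ω => (S (j+1) ω - S j ω)^2)) μ :=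
    intT2.congr hT2eq
  have hT2 : μ[fun ω => (T ω)^2 | ℱ j] =ᵐ[μ] fun _ => a := by
    calc μ[fun ω => (T ω)^2 | ℱ j]
        =ᵐ[μ] μ[(fun ω => ((S j ω)^2)⁻¹) * (fun ω => (S (j+1) ω - S j ω)^2) | ℱ j] :=
          condExp_congr_ae hT2eq
      _ =ᵐ[μ] (fun ω => ((S j ω)^2)⁻¹) * μ[(fun ω => (S (j+1) ω - S j ω)^2) | ℱ j] :=
          condExp_mul_of_stronglyMeasurable_left hQm intQD intD2
      _ =ᵐ[μ] fun _ => a := by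
          filter_upwards [hvarj, hposj] with ω hv hp
          simp only [Pi.mul_apply]
          rw [hv]
          have hne : S j ω ≠ 0 := hp.ne'
          show ((S j ω)^2)⁻¹ * (a * S j ω ^2) = a
          field_simp
  -- E[g | F j] bounds
  have intzT2 : Integrable (fun ω => ζ * (T ω)^2) μ := intT2.const_mul ζ
  have hzT2 : μ[fun ω => ζ * (T ω)^2 | ℱ j] =ᵐ[μ] fun _ => ζ * a := by
    have : (fun ω => ζ * (T ω)^2) = ζ • (fun ω => (T ω)^2) := by
      funext ω; simp
    rw [this]
    refine (condExp_smul ζ _ (ℱ j)).trans ?_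
    filter_upwards [hT2] with ω h
    simp [h]
  have hgu : μ[g | ℱ j] ≤ᵐ[μ] fun _ => ζ * a := by
    refine (condExp_mono intG intzT2 ?_).trans hzT2.le
    filter_upwards [hgb] with ω h
    exact (le_abs_self _).trans h
  have hgl : (fun _ => -(ζ * a)) ≤ᵐ[μ] μ[g | ℱ j] := by
    have hneg : μ[fun ω => -(ζ * (T ω)^2) | ℱ j] =ᵐ[μ] fun _ => -(ζ * a) := by
      have : (fun ω => -(ζ * (T ω)^2)) = -(fun ω => ζ * (T ω)^2) := by funext ω; simp
      rw [this]
      refine (condExp_neg _ (ℱ j)).trans ?_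
      filter_upwards [hzT2] with ω h
      simp [h]
    refine hneg.symm.le.trans (condExp_mono intzT2.neg intG ?_)
    filter_upwards [hgb] with ω h
    have := neg_abs_le (g ω)
    linarith [abs_le.mp h]
  -- assemble
  have hLeq : L = (T - fun ω => (T ω)^2/2) + g := by
    funext ω; simp only [hgdef, Pi.add_apply, Pi.sub_apply]; ring
  have inth : Integrable (fun ω => (T ω)^2/2) μ := intT2.div_const 2
  have hhalf : μ[fun ω => (T ω)^2/2 | ℱ j] =ᵐ[μ] fun _ => a/2 := by
    have : (fun ω => (T ω)^2/2) = (2⁻¹:ℝ) • (fun ω => (T ω)^2) := by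
      funext ω; simp; ring
    rw [this]
    refine (condExp_smul _ _ (ℱ j)).trans ?_
    filter_upwards [hT2] with ω h
    simp [h]; ring
  have hL : μ[L | ℱ j] =ᵐ[μ] μ[T | ℱ j] - μ[fun ω => (T ω)^2/2 | ℱ j] + μ[g | ℱ j] := by
    rw [hLeq]
    exact (condExp_add (intT.sub inth) intG (ℱ j)).trans
      ((condExp_sub intT inth (ℱ j)).add Filter.EventuallyEq.rfl)
  filter_upwards [hL, hT0, hhalf, hgu, hgl] with ω e0 e2 e3 e4 e5
  have : (μ[L | ℱ j]) ω = (μ[T | ℱ j]) ω - (μ[fun ω => (T ω)^2/2 | ℱ j]) ω + (μ[g | ℱ j]) ω := by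
    simpa using e0
  have e4' : (μ[g | ℱ j]) ω ≤ ζ * a := e4
  have e5' : -(ζ * a) ≤ (μ[g | ℱ j]) ω := e5
  have e2' : (μ[T | ℱ j]) ω = 0 := e2
  have e3' : (μ[fun ω => (T ω)^2/2 | ℱ j]) ω = a/2 := e3
  rw [abs_le]
  constructor <;>
  · rw [this, e2', e3']
    linarith

theorem stmt17 {Ω : Type*} {mΩ : MeasurableSpace Ω} (μ : Measure Ω) [IsProbabilityMeasure μ]
    (n : ℕ) (hn : 0 < n) (c : ℝ) (hc : 0 < c)
    (ζ : ℝ) (hζ0 : 0 < ζ) (hζ1 : ζ < 2/3)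
    (ℱ : Filtration ℕ mΩ) (S : ℕ → Ω → ℝ)
    (hmart : Martingale S ℱ μ) (hS0 : ∀ ω, S 0 ω = 1)
    (hpos : ∀ m, ∀ᵐ ω ∂μ, 0 < S m ω)
    (hvar : ∀ m < n, μ[fun ω => (S (m+1) ω - S m ω)^2 | ℱ m]
        =ᵐ[μ] fun ω => (Real.exp (c / n) - 1) * (S m ω)^2)
    (hzc : ∀ m < n, ∀ᵐ ω ∂μ, |S (m+1) ω / S m ω - 1| ≤ ζ)
    (h1 : 1 ≤ 3 * (1 - ζ))
    (h2 : Real.exp (c / n) - 1 ≤ 2 * c / n)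
    (h3 : Real.exp (c / n) - 1 - c / n ≤ 2 * c^2 / n^2)
    (β : ℕ → Ω → ℝ)
    (hβ : ∀ m, β m = fun ω =>
      - ∑ k ∈ Finset.Icc 1 m,
        ((μ[fun ω' => Real.log (1 + (S k ω' / S (k-1) ω' - 1)) | ℱ (k-1)]) ω + c / (2*n))) :
    ∀ᵐ ω ∂μ, ∀ m, 1 ≤ m → m ≤ n → |β m ω| ≤ 2 * c * ζ + c^2 / n := by
  have hn' : (0:ℝ) < n := Nat.cast_pos.mpr hn
  set a : ℝ := Real.exp (c / n) - 1 with hadef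
  have hac : c / n ≤ a := by
    have := Real.add_one_le_exp (c / n)
    rw [hadef]; linarith
  have ha : 0 < a := lt_of_lt_of_le (by positivity) hac
  have key_ae : ∀ᵐ ω ∂μ, ∀ k : ℕ, 1 ≤ k → k ≤ n →
      |(μ[fun ω' => Real.log (1 + (S k ω' / S (k-1) ω' - 1)) | ℱ (k-1)]) ω + c/(2*n)|
        ≤ 2*c*ζ/n + c^2/n^2 := by
    rw [ae_all_iff]
    intro k
    by_cases hk : 1 ≤ k ∧ k ≤ n
    · obtain ⟨j, rfl⟩ : ∃ j, k = j + 1 := ⟨k-1, (Nat.succ_pred_eq_of_pos hk.1).symm⟩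
      have hj : j < n := hk.2
      have hkey := key_lemma μ ℱ S j ζ a hζ0 hζ1 h1 ha hmart (hpos j) (hvar j hj) (hzc j hj)
      filter_upwards [hkey] with ω h
      intro _ _
      rw [Nat.add_sub_cancel]
      set E : ℝ := (μ[fun ω' => Real.log (1 + (S (j+1) ω' / S j ω' - 1)) | ℱ j]) ω with hE
      have he : E + c/(2*n) = (E + a/2) + (c/(2*n) - a/2) := by ring
      have t0 : |E + c/(2*n)| ≤ |E + a/2| + |c/(2*n) - a/2| := by
        rw [he]; exact abs_add_le _ _
      have hd : c/(2*(n:ℝ)) = (c/n)/2 := by ring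
      have t1 : |c/(2*n) - a/2| = a/2 - c/(2*n) := by
        rw [abs_of_nonpos (by rw [hd]; linarith)]; ring
      have t2 : ζ * a ≤ ζ * (2*c/n) := mul_le_mul_of_nonneg_left h2 hζ0.le
      have t3 : a - c/n ≤ 2*(c^2/n^2) := by
        have h4 : 2*c^2/(n:ℝ)^2 = 2*(c^2/n^2) := by ring
        rw [hadef]; rw [h4] at h3; linarith
      have hsq : (n:ℝ)^2 > 0 := by positivity
      calc |E + c/(2*n)| ≤ (ζ * a) + (a/2 - c/(2*n)) := by
            rw [t1] at t0; linarith
        _ ≤ 2*c*ζ/n + c^2/n^2 := by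
            have : ζ * (2*c/n) = 2*c*ζ/n := by ring
            rw [this] at t2
            have : a/2 - c/(2*n) ≤ c^2/n^2 := by
              rw [hd]; linarith
            linarith
    · filter_upwards with ω hk1 hk2
      exact absurd ⟨hk1, hk2⟩ hk
  filter_upwards [key_ae] with ω hω
  intro m h1m hmn
  rw [hβ m]
  simp only [abs_neg]
  have hmn' : (m:ℝ) ≤ n := Nat.cast_le.mpr hmn
  calc |∑ k ∈ Finset.Icc 1 m,
        ((μ[fun ω' => Real.log (1 + (S k ω' / S (k-1) ω' - 1)) | ℱ (k-1)]) ω + c/(2*n))|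
      ≤ ∑ k ∈ Finset.Icc 1 m,
        |(μ[fun ω' => Real.log (1 + (S k ω' / S (k-1) ω' - 1)) | ℱ (k-1)]) ω + c/(2*n)| :=
        Finset.abs_sum_le_sum_abs _ _
    _ ≤ ∑ _k ∈ Finset.Icc 1 m, (2*c*ζ/n + c^2/n^2) := by
        refine Finset.sum_le_sum fun k hk => ?_
        obtain ⟨hk1, hk2⟩ := Finset.mem_Icc.mp hk
        exact hω k hk1 (hk2.trans hmn)
    _ = m * (2*c*ζ/n + c^2/n^2) := by
        rw [Finset.sum_const, Nat.card_Icc, nsmul_eq_mul]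
        simp
    _ ≤ n * (2*c*ζ/n + c^2/n^2) := by
        refine mul_le_mul_of_nonneg_right hmn' (by positivity)
    _ = 2*c*ζ + c^2/n := by
        field_simp
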